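/- Let n ≥ m ≥ 0, d ≥ 1 with a_i = d·α_i, b_j = d·β_j integers, and work in the relative twisted de Rham cohomology of f(x_i,y_j,z) = ∑_{i=2}^n x_i^d − ∑_{j=1}^m y_j^d + z ∏ y_j^d / ∏ x_i^d over the base with coordinate z, with Gauss–Manin operator D = ∇_{z∂_z} acting by Dω = z∂_z(ω) + z∂_z(f)·ω. For integers t_2,…,t_n, s_1,…,s_m and ω̃ = ∏_i x_i^{t_i} ∏_j y_j^{s_j} · (dx_2/x_2)∧⋯∧(dy_m/y_m), the following identities hold in cohomology: (D − t_i/d)·ω̃ = x_i^d·ω̃ for each 2 ≤ i ≤ n, and (D + s_j/d)·ω̃ = y_j^d·ω̃ for each 1 ≤ j ≤ m. -/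

import Mathlib

open Sum

/-- Variable index set: `z`, the `x_i` (`2 ≤ i ≤ n`) and the `y_j` (`1 ≤ j ≤ m`). -/
abbrev HypVar (n m : ℕ) : Type := Unit ⊕ (Fin (n - 1) ⊕ Fin m)

/-- The algebra of Laurent polynomials `ℂ[z^±, x_i^±, y_j^±]`, i.e. the monoid algebra of
`ℤ^{HypVar n m}` over `ℂ`. -/
abbrev LaurentAlg (n m : ℕ) := AddMonoidAlgebra ℂ (HypVar n m →₀ ℤ)

/-- The monomial with exponent vector `τ`. -/
noncomputable def mono (n m : ℕ) (τ : HypVar n m → ℤ) : LaurentAlg n m :=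
  AddMonoidAlgebra.single (Finsupp.equivFunOnFinite.symm τ) 1

/-- The logarithmic derivative `w ∂/∂w` on Laurent polynomials:
`∑ c_τ X^τ ↦ ∑ τ_w · c_τ X^τ`. -/
noncomputable def logDerivVar (n m : ℕ) (w : HypVar n m) (g : LaurentAlg n m) :
    LaurentAlg n m :=
  Finsupp.sum g.coeff fun τ c => AddMonoidAlgebra.single τ ((τ w : ℂ) * c)

/-- The Laurent polynomial `f = ∑_{i=2}^n x_i^d − ∑_{j=1}^m y_j^d + z·∏y_j^d/∏x_i^d`. -/
noncomputable def fLaurent (n m d : ℕ) : LaurentAlg n m :=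
  (∑ i : Fin (n - 1), mono n m (fun v => if v = inr (inl i) then (d : ℤ) else 0))
    - (∑ j : Fin m, mono n m (fun v => if v = inr (inr j) then (d : ℤ) else 0))
    + mono n m (Sum.elim (fun _ => (1 : ℤ))
        (Sum.elim (fun _ => -(d : ℤ)) (fun _ => (d : ℤ))))

/-- The Gauss–Manin operator `D = ∇_{z∂_z}`, `D g = z∂_z g + z∂_z(f)·g`, on the chain
level computing the relative twisted de Rham cohomology in top degree. -/
noncomputable def DGM (n m d : ℕ) (g : LaurentAlg n m) : LaurentAlg n m :=
  logDerivVar n m (inl ()) g + logDerivVar n m (inl ()) (fLaurent n m d) * g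

/-- The twisted differential along the torus variable `w`:
`L_w(g) = w∂_w g + w∂_w(f)·g`.  The top-degree relative twisted de Rham cohomology is the
quotient of `LaurentAlg` by the span of the images of the `L_w`. -/
noncomputable def LGM (n m d : ℕ) (w : Fin (n - 1) ⊕ Fin m) (g : LaurentAlg n m) :
    LaurentAlg n m :=
  logDerivVar n m (inr w) g + logDerivVar n m (inr w) (fLaurent n m d) * g

/-- The submodule of relations: classes that vanish in the relative twisted de Rham
cohomology `H^{n+m-1}_dR(U/S, f)`. -/
noncomputable def relSubmodule (n m d : ℕ) : Submodule ℂ (LaurentAlg n m) :=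
  Submodule.span ℂ {h | ∃ w g, h = LGM n m d w g}


noncomputable def logDerivLin (n m : ℕ) (w : HypVar n m) :
    LaurentAlg n m →ₗ[ℂ] LaurentAlg n m where
  toFun := logDerivVar n m w
  map_add' g h := by
    unfold logDerivVar
    rw [AddMonoidAlgebra.coeff_add, Finsupp.sum_add_index' (fun τ => by simp) (fun τ b₁ b₂ => by
      simp [mul_add, AddMonoidAlgebra.single_add])]
  map_smul' c g := by
    show logDerivVar n m w (c • g) = (RingHom.id ℂ) c • logDerivVar n m w g
    unfold logDerivVar
    rw [AddMonoidAlgebra.coeff_smul, Finsupp.sum_smul_index (fun τ => by simp), Finsupp.smul_sum]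
    simp only [RingHom.id_apply]
    congr 1; ext τ b
    rw [AddMonoidAlgebra.smul_single', mul_left_comm]

lemma logDerivLin_mono (n m : ℕ) (w : HypVar n m) (τ : HypVar n m → ℤ) :
    logDerivLin n m w (mono n m τ) = (τ w : ℂ) • mono n m τ := by
  show logDerivVar n m w (mono n m τ) = _
  unfold logDerivVar mono
  rw [AddMonoidAlgebra.coeff_single, Finsupp.sum_single_index (by simp)]
  simp [AddMonoidAlgebra.smul_single']

lemma logDeriv_mono' (n m : ℕ) (w : HypVar n m) (τ : HypVar n m → ℤ) :
    logDerivVar n m w (mono n m τ) = (τ w : ℂ) • mono n m τ :=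
  logDerivLin_mono n m w τ

lemma logDerivVar_eq (n m : ℕ) (w : HypVar n m) (g : LaurentAlg n m) :
    logDerivVar n m w g = logDerivLin n m w g := rfl

lemma logDeriv_f_z (n m d : ℕ) :
    logDerivVar n m (inl ()) (fLaurent n m d)
      = mono n m (Sum.elim (fun _ => (1 : ℤ))
          (Sum.elim (fun _ => -(d : ℤ)) (fun _ => (d : ℤ)))) := by
  rw [logDerivVar_eq]
  unfold fLaurent
  rw [map_add, map_sub, map_sum, map_sum]
  simp [logDerivLin_mono]

lemma logDeriv_f_x (n m d : ℕ) (i : Fin (n - 1)) :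
    logDerivVar n m (inr (inl i)) (fLaurent n m d)
      = (d : ℂ) • mono n m (fun v => if v = inr (inl i) then (d : ℤ) else 0)
        - (d : ℂ) • mono n m (Sum.elim (fun _ => (1 : ℤ))
            (Sum.elim (fun _ => -(d : ℤ)) (fun _ => (d : ℤ)))) := by
  rw [logDerivVar_eq]
  unfold fLaurent
  rw [map_add, map_sub, map_sum, map_sum]
  simp only [logDerivLin_mono, Sum.elim_inr, Sum.elim_inl, inr.injEq, inl.injEq,
    apply_ite (fun z : ℤ => (z : ℂ)), Int.cast_natCast, Int.cast_zero, Int.cast_neg,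
    ite_smul, zero_smul, Finset.sum_ite_eq, Finset.mem_univ, if_true, reduceCtorEq,
    if_false, Finset.sum_const_zero, sub_zero, neg_smul]
  abel

lemma logDeriv_f_y (n m d : ℕ) (j : Fin m) :
    logDerivVar n m (inr (inr j)) (fLaurent n m d)
      = (d : ℂ) • mono n m (Sum.elim (fun _ => (1 : ℤ))
            (Sum.elim (fun _ => -(d : ℤ)) (fun _ => (d : ℤ))))
        - (d : ℂ) • mono n m (fun v => if v = inr (inr j) then (d : ℤ) else 0) := by
  rw [logDerivVar_eq]
  unfold fLaurent
  rw [map_add, map_sub, map_sum, map_sum]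
  simp only [logDerivLin_mono, Sum.elim_inr, Sum.elim_inl, inr.injEq, inl.injEq,
    apply_ite (fun z : ℤ => (z : ℂ)), Int.cast_natCast, Int.cast_zero, Int.cast_neg,
    ite_smul, zero_smul, Finset.sum_ite_eq, Finset.mem_univ, if_true, reduceCtorEq,
    if_false, Finset.sum_const_zero, zero_sub, neg_smul]
  abel

/-- for `ω̃ = ∏ x_i^{t_i} ∏ y_j^{s_j} · dx/x ∧ dy/y`, in relative twisted de
Rham cohomology one has `(D − t_i/d)·ω̃ = x_i^d·ω̃` and `(D + s_j/d)·ω̃ = y_j^d·ω̃`,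
i.e. the corresponding differences are relations. -/
theorem stmt19 (n m d : ℕ) (hnm : m ≤ n) (hd : 1 ≤ d)
    (α : Fin n → ℚ) (β : Fin m → ℚ)
    (A : Fin n → ℤ) (hA : ∀ i, (A i : ℚ) = d * α i)
    (B : Fin m → ℤ) (hB : ∀ j, (B j : ℚ) = d * β j)
    (t : Fin (n - 1) → ℤ) (s : Fin m → ℤ)
    (ω : LaurentAlg n m)
    (hω : ω = mono n m (Sum.elim (fun _ => (0 : ℤ)) (Sum.elim t s))) :
    (∀ i : Fin (n - 1),
      DGM n m d ω - ((t i : ℂ) / (d : ℂ)) • ω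
          - mono n m (fun v => if v = inr (inl i) then (d : ℤ) else 0) * ω
        ∈ relSubmodule n m d) ∧
    (∀ j : Fin m,
      DGM n m d ω + ((s j : ℂ) / (d : ℂ)) • ω
          - mono n m (fun v => if v = inr (inr j) then (d : ℤ) else 0) * ω
        ∈ relSubmodule n m d) := by
  have hd' : (d : ℂ) ≠ 0 := Nat.cast_ne_zero.mpr (by omega)
  constructor
  · intro i
    have hmem : LGM n m d (inl i) ω ∈ relSubmodule n m d :=
      Submodule.subset_span ⟨inl i, ω, rfl⟩
    have key : DGM n m d ω - ((t i : ℂ) / (d : ℂ)) • ω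
          - mono n m (fun v => if v = inr (inl i) then (d : ℤ) else 0) * ω
        = (-(d : ℂ)⁻¹) • LGM n m d (inl i) ω := by
      unfold DGM LGM
      rw [logDeriv_f_z, logDeriv_f_x, hω, logDeriv_mono', logDeriv_mono']
      simp only [Sum.elim_inl, Sum.elim_inr, Int.cast_zero, zero_smul, zero_add,
        sub_mul, smul_mul_assoc]
      rw [← hω]
      match_scalars <;> field_simp
    rw [key]
    exact Submodule.smul_mem _ _ hmem
  · intro j
    have hmem : LGM n m d (inr j) ω ∈ relSubmodule n m d :=
      Submodule.subset_span ⟨inr j, ω, rfl⟩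
    have key : DGM n m d ω + ((s j : ℂ) / (d : ℂ)) • ω
          - mono n m (fun v => if v = inr (inr j) then (d : ℤ) else 0) * ω
        = (d : ℂ)⁻¹ • LGM n m d (inr j) ω := by
      unfold DGM LGM
      rw [logDeriv_f_z, logDeriv_f_y, hω, logDeriv_mono', logDeriv_mono']
      simp only [Sum.elim_inl, Sum.elim_inr, Int.cast_zero, zero_smul, zero_add,
        sub_mul, smul_mul_assoc]
      rw [← hω]
      match_scalars <;> field_simp
    rw [key]
    exact Submodule.smul_mem _ _ hmem
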